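/- arXiv:1410.8669 — 7 statements merged into one kernel-verified Lean document; each statement's English description precedes it below -/
import Mathlib

section
/- Let k, H ∈ ℝ and let I ⊆ ℝ be an open interval. Suppose u, σ : ℝ → ℝ are differentiable on I, with u(s) > 0 and 1 + (k/4)·u(s)² > 0 for all s ∈ I, and suppose that for all s ∈ I: u'(s) = (1 + (k/4)·u(s)²)·cos σ(s) and σ'(s) = 2H − (1/u(s) − (k/4)·u(s))·sin σ(s). Then the function J(s) = (u(s)/(1 + (k/4)·u(s)²))·(sin σ(s) − H·u(s)) has derivative zero at every point of I; in particular J is constant on I. -/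
/-- The function `J(s) = (u(s)/(1 + (k/4)u(s)²))·(sin σ(s) − H·u(s))` is a first
integral of the profile-curve ODE system
`u' = (1 + (k/4)u²)·cos σ`, `σ' = 2H − (1/u − (k/4)u)·sin σ`
on an open interval where `u > 0` and `1 + (k/4)u² > 0`: it has derivative zero at
every point of the interval, and in particular is constant on the interval. -/
theorem first_integral_of_profile_system
    (k H a b : ℝ) (u σ : ℝ → ℝ)
    (hu_pos : ∀ s ∈ Set.Ioo a b, 0 < u s)
    (hden_pos : ∀ s ∈ Set.Ioo a b, 0 < 1 + (k / 4) * (u s) ^ 2)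
    (hu' : ∀ s ∈ Set.Ioo a b,
      HasDerivAt u ((1 + (k / 4) * (u s) ^ 2) * Real.cos (σ s)) s)
    (hσ' : ∀ s ∈ Set.Ioo a b,
      HasDerivAt σ (2 * H - (1 / u s - (k / 4) * u s) * Real.sin (σ s)) s) :
    (∀ s ∈ Set.Ioo a b,
      HasDerivAt (fun t => (u t / (1 + (k / 4) * (u t) ^ 2)) *
        (Real.sin (σ t) - H * u t)) 0 s) ∧
    (∀ s ∈ Set.Ioo a b, ∀ t ∈ Set.Ioo a b,
      (u s / (1 + (k / 4) * (u s) ^ 2)) * (Real.sin (σ s) - H * u s) =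
      (u t / (1 + (k / 4) * (u t) ^ 2)) * (Real.sin (σ t) - H * u t)) := by
  have hJ : ∀ s ∈ Set.Ioo a b,
      HasDerivAt (fun t => (u t / (1 + (k / 4) * (u t) ^ 2)) *
        (Real.sin (σ t) - H * u t)) 0 s := by
    intro s hs
    have hu0 : u s ≠ 0 := (hu_pos s hs).ne'
    have hD0 : (1 + (k / 4) * (u s) ^ 2) ≠ 0 := (hden_pos s hs).ne'
    have hus := hu' s hs
    have hσs := hσ' s hs
    have hden : HasDerivAt (fun t => 1 + (k / 4) * (u t) ^ 2)
        ((k / 4) * (2 * u s * ((1 + (k / 4) * (u s) ^ 2) * Real.cos (σ s)))) s := by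
      have := ((hus.pow 2).const_mul (k / 4)).const_add 1
      simpa [pow_one] using this
    have hquot := hus.div hden hD0
    have hsin : HasDerivAt (fun t => Real.sin (σ t))
        (Real.cos (σ s) * (2 * H - (1 / u s - (k / 4) * u s) * Real.sin (σ s))) s :=
      (Real.hasDerivAt_sin (σ s)).comp s hσs
    have hsecond : HasDerivAt (fun t => Real.sin (σ t) - H * u t)
        (Real.cos (σ s) * (2 * H - (1 / u s - (k / 4) * u s) * Real.sin (σ s))
          - H * ((1 + (k / 4) * (u s) ^ 2) * Real.cos (σ s))) s :=
      hsin.sub (hus.const_mul H)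
    have := hquot.mul hsecond
    have h4 : (4:ℝ) + k * (u s) ^ 2 ≠ 0 := by
      intro h; apply hD0; linarith
    convert this using 1
    · rfl
    · rfl
    · rfl
    simp only [Pi.div_apply]
    field_simp
    ring
  refine ⟨hJ, fun s hs t ht => ?_⟩
  have key := Convex.norm_image_sub_le_of_norm_hasDerivWithin_le
    (f := fun t => (u t / (1 + (k / 4) * (u t) ^ 2)) * (Real.sin (σ t) - H * u t))
    (f' := fun _ => (0 : ℝ)) (C := 0)
    (fun x hx => (hJ x hx).hasDerivWithinAt)
    (fun x _ => by simp) (convex_Ioo a b) ht hs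
  have : ‖(u s / (1 + (k / 4) * (u s) ^ 2)) * (Real.sin (σ s) - H * u s) -
      (u t / (1 + (k / 4) * (u t) ^ 2)) * (Real.sin (σ t) - H * u t)‖ ≤ 0 := by
    simpa using key
  have := norm_le_zero_iff.mp this
  linarith [sub_eq_zero.mp this]
end

section
/- Let k, τ ∈ ℝ and let I ⊆ ℝ be an open interval. Suppose u, σ : ℝ → ℝ are differentiable on I, with u(s) > 0 and 1 + (k/4)·u(s)² > 0 for all s ∈ I, and u'(s) = (1 + (k/4)·u(s)²)·cos σ(s) for all s ∈ I. Then for every s ∈ I, (σ'(s)·sin σ(s)/u(s) − (k/4)·sin² σ(s) + (k/4 − τ²)·cos² σ(s)/(1 + τ²·u(s)²) + k/4)·(u(s)·√(1 + τ²·u(s)²)/(1 + (k/4)·u(s)²)) equals the derivative at s of the function t ↦ −u'(t)·√(1 + τ²·u(t)²)/(1 + (k/4)·u(t)²)². -/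
set_option maxHeartbeats 1000000


/-- For a profile curve with `u' = (1 + (k/4)u²)·cos σ` on an open interval where
`u > 0` and `1 + (k/4)u² > 0`, the integrand of the second summand of the
rotationally invariant Willmore-like energy,
`(σ'·sin σ/u − (k/4)sin²σ + (k/4 − τ²)cos²σ/(1 + τ²u²) + k/4)·(u√(1 + τ²u²)/(1 + (k/4)u²))`,
is the derivative of `t ↦ −u'(t)·√(1 + τ²u(t)²)/(1 + (k/4)u(t)²)²`. -/
theorem topological_integrand_is_exact_derivative
    (k τ a b : ℝ) (u σ u' σ' : ℝ → ℝ)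
    (hu' : ∀ s ∈ Set.Ioo a b, HasDerivAt u (u' s) s)
    (hσ' : ∀ s ∈ Set.Ioo a b, HasDerivAt σ (σ' s) s)
    (hu_pos : ∀ s ∈ Set.Ioo a b, 0 < u s)
    (hden_pos : ∀ s ∈ Set.Ioo a b, 0 < 1 + (k / 4) * (u s) ^ 2)
    (hode : ∀ s ∈ Set.Ioo a b,
      u' s = (1 + (k / 4) * (u s) ^ 2) * Real.cos (σ s)) :
    ∀ s ∈ Set.Ioo a b,
      HasDerivAt
        (fun t => -(u' t) * Real.sqrt (1 + τ ^ 2 * (u t) ^ 2) /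
          (1 + (k / 4) * (u t) ^ 2) ^ 2)
        ((σ' s * Real.sin (σ s) / u s - (k / 4) * Real.sin (σ s) ^ 2 +
            (k / 4 - τ ^ 2) * Real.cos (σ s) ^ 2 / (1 + τ ^ 2 * (u s) ^ 2) +
            k / 4) *
          (u s * Real.sqrt (1 + τ ^ 2 * (u s) ^ 2) /
            (1 + (k / 4) * (u s) ^ 2))) s := by
  intro s hs
  have hW : (0:ℝ) < 1 + τ ^ 2 * (u s) ^ 2 := by positivity
  have hWne : (1 + τ ^ 2 * (u s) ^ 2) ≠ 0 := ne_of_gt hW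
  have hD := hden_pos s hs
  have hDne : (1 + (k / 4) * (u s) ^ 2) ≠ 0 := ne_of_gt hD
  have hune : u s ≠ 0 := ne_of_gt (hu_pos s hs)
  have hsq : Real.sqrt (1 + τ ^ 2 * (u s) ^ 2) ^ 2 = 1 + τ ^ 2 * (u s) ^ 2 :=
    Real.sq_sqrt hW.le
  have hsqpos : 0 < Real.sqrt (1 + τ ^ 2 * (u s) ^ 2) := Real.sqrt_pos.mpr hW
  have hsqne := ne_of_gt hsqpos
  have hWd : HasDerivAt (fun t => 1 + τ ^ 2 * (u t) ^ 2)
      (τ ^ 2 * (2 * u s ^ 1 * u' s)) s :=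
    (((hu' s hs).pow 2).const_mul (τ ^ 2)).const_add 1
  have hsqrtd := hWd.sqrt hWne
  have hcosd := (hσ' s hs).cos
  have hnumd := hcosd.neg.mul hsqrtd
  have hDd : HasDerivAt (fun t => 1 + (k / 4) * (u t) ^ 2)
      (k / 4 * (2 * u s ^ 1 * u' s)) s :=
    (((hu' s hs).pow 2).const_mul (k / 4)).const_add 1
  have hG := hnumd.div hDd hDne
  have heq : (fun t => -(u' t) * Real.sqrt (1 + τ ^ 2 * (u t) ^ 2) /
      (1 + (k / 4) * (u t) ^ 2) ^ 2)
      =ᶠ[nhds s]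
      (fun t => -Real.cos (σ t) * Real.sqrt (1 + τ ^ 2 * (u t) ^ 2) /
        (1 + (k / 4) * (u t) ^ 2)) := by
    filter_upwards [Ioo_mem_nhds hs.1 hs.2] with t ht
    have hDt : (1 + (k / 4) * (u t) ^ 2) ≠ 0 := (hden_pos t ht).ne'
    rw [hode t ht]
    have aux : ∀ D C Q : ℝ, D ≠ 0 → -(D * C) * Q / D ^ 2 = -C * Q / D := by
      intro D C Q h; field_simp
    exact aux _ _ _ hDt
  refine HasDerivAt.congr_of_eventuallyEq ?_ heq
  convert hG using 1
  case e'_4 => rfl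
  case e'_8 => rfl
  rw [hode s hs]
  have hsin : Real.sin (σ s) ^ 2 = 1 - Real.cos (σ s) ^ 2 := by
    have := Real.sin_sq_add_cos_sq (σ s); linarith
  set Q := Real.sqrt (1 + τ ^ 2 * (u s) ^ 2) with hQ
  rw [hsin, show (1 : ℝ) + τ ^ 2 * u s ^ 2 = Q ^ 2 from hsq.symm]
  field_simp [hune, hDne, hsqne]
  have h4 : (0:ℝ) < 4 + k * u s ^ 2 := by nlinarith [hD]
  have hA : (0:ℝ) < u s * 4 * (4 * Q ^ 2) * 4 * (4 + k * u s ^ 2) :=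
    mul_pos (mul_pos (mul_pos (mul_pos (hu_pos s hs) four_pos)
      (by positivity)) four_pos) h4
  have hB : (0:ℝ) < 4 * (2 * Q) * 4 * (4 * 4) * (4 + k * u s ^ 2) ^ 2 :=
    mul_pos (mul_pos (mul_pos (mul_pos four_pos (by positivity))
      four_pos) (by norm_num)) (pow_pos h4 2)
  rw [div_left_inj' (by rw [mul_comm]; exact h4.ne')]
  simp only [Pi.neg_apply, Pi.mul_apply, ← hQ]
  linear_combination (-u s * k * Real.cos (σ s) ^ 2) * hsq
end

section
/- Let k, τ ∈ ℝ and L > 0. Suppose u, σ : [0, L] → ℝ are continuous on [0, L] and differentiable on (0, L), with u continuously differentiable on [0, L], u(0) = u(L) = 0, u(s) > 0 for s ∈ (0, L), 1 + (k/4)·u(s)² > 0 for all s ∈ [0, L], cos σ(0) = 1, cos σ(L) = −1, and u'(s) = (1 + (k/4)·u(s)²)·cos σ(s) for all s ∈ [0, L]. Assume the function g(s) = (σ'(s)·sin σ(s)/u(s) − (k/4)·sin² σ(s) + (k/4 − τ²)·cos² σ(s)/(1 + τ²·u(s)²) + k/4)·(u(s)·√(1 + τ²·u(s)²)/(1 +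 (k/4)·u(s)²)) is interval-integrable on [0, L]. Then 2π·∫₀^L g(s) ds = 4π. -/
open MeasureTheory intervalIntegral

private lemma willmore_aux (k τ x c si p A B : ℝ) (hx : x ≠ 0) (hA : 0 < A) (hBp : 0 < B)
    (hA2 : A ^ 2 = 1 + τ ^ 2 * x ^ 2) (hB2 : B = 1 + k / 4 * x ^ 2)
    (hsc : si ^ 2 + c ^ 2 = 1) :
    (p * si / x - k / 4 * si ^ 2 + (k / 4 - τ ^ 2) * c ^ 2 / (1 + τ ^ 2 * x ^ 2) +
        k / 4) * (x * A / B)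
    = ((p * si * A + -c * (τ ^ 2 * (2 * x * (B * c)) / (2 * A))) * B -
        -c * A * (k / 4 * (2 * x * (B * c)))) / B ^ 2 := by
  have hsi2 : si ^ 2 = 1 - c ^ 2 := by linarith
  rw [hsi2, ← hA2]
  have hAne := hA.ne'
  have hBne := hBp.ne'
  field_simp
  linear_combination (-k * x * c ^ 2) * hA2 + (4 * x * c ^ 2 * τ ^ 2) * hB2

/-- For a rotationally invariant sphere profile: `u, σ` continuous on `[0, L]` and
differentiable on `(0, L)`, `u` continuously differentiable on `[0, L]`,
`u(0) = u(L) = 0`, `u > 0` on `(0, L)`, `1 + (k/4)u² > 0` on `[0, L]`,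
`cos σ(0) = 1`, `cos σ(L) = −1`, and `u' = (1 + (k/4)u²)·cos σ` on `[0, L]`.
If the integrand `g` of the second (topological) summand of the Willmore-like
energy is interval-integrable on `[0, L]`, then `2π∫₀^L g = 4π`. -/
theorem topological_summand_eq_four_pi
    (k τ L : ℝ) (hL : 0 < L) (u σ u' σ' : ℝ → ℝ)
    (hu_cont : ContinuousOn u (Set.Icc 0 L))
    (hσ_cont : ContinuousOn σ (Set.Icc 0 L))
    (hu_deriv : ∀ s ∈ Set.Icc 0 L, HasDerivWithinAt u (u' s) (Set.Icc 0 L) s)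
    (hu'_cont : ContinuousOn u' (Set.Icc 0 L))
    (hσ_deriv : ∀ s ∈ Set.Ioo 0 L, HasDerivAt σ (σ' s) s)
    (hu0 : u 0 = 0) (huL : u L = 0)
    (hu_pos : ∀ s ∈ Set.Ioo 0 L, 0 < u s)
    (hden_pos : ∀ s ∈ Set.Icc 0 L, 0 < 1 + (k / 4) * (u s) ^ 2)
    (hσ0 : Real.cos (σ 0) = 1) (hσL : Real.cos (σ L) = -1)
    (hode : ∀ s ∈ Set.Icc 0 L,
      u' s = (1 + (k / 4) * (u s) ^ 2) * Real.cos (σ s))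
    (hint : IntervalIntegrable
      (fun s => (σ' s * Real.sin (σ s) / u s - (k / 4) * Real.sin (σ s) ^ 2 +
          (k / 4 - τ ^ 2) * Real.cos (σ s) ^ 2 / (1 + τ ^ 2 * (u s) ^ 2) +
          k / 4) *
        (u s * Real.sqrt (1 + τ ^ 2 * (u s) ^ 2) / (1 + (k / 4) * (u s) ^ 2)))
      volume 0 L) :
    2 * Real.pi *
      ∫ s in (0 : ℝ)..L,
        (σ' s * Real.sin (σ s) / u s - (k / 4) * Real.sin (σ s) ^ 2 +
            (k / 4 - τ ^ 2) * Real.cos (σ s) ^ 2 / (1 + τ ^ 2 * (u s) ^ 2) +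
            k / 4) *
          (u s * Real.sqrt (1 + τ ^ 2 * (u s) ^ 2) /
            (1 + (k / 4) * (u s) ^ 2)) = 4 * Real.pi := by
  set g : ℝ → ℝ := fun s => (σ' s * Real.sin (σ s) / u s - (k / 4) * Real.sin (σ s) ^ 2 +
          (k / 4 - τ ^ 2) * Real.cos (σ s) ^ 2 / (1 + τ ^ 2 * (u s) ^ 2) +
          k / 4) *
        (u s * Real.sqrt (1 + τ ^ 2 * (u s) ^ 2) / (1 + (k / 4) * (u s) ^ 2)) with hg
  set F : ℝ → ℝ := fun s =>
    -Real.cos (σ s) * Real.sqrt (1 + τ ^ 2 * (u s) ^ 2) / (1 + (k / 4) * (u s) ^ 2)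
    with hF
  have hA_pos : ∀ s : ℝ, (0:ℝ) < 1 + τ ^ 2 * (u s) ^ 2 := fun s => by positivity
  have hFcont : ContinuousOn F (Set.Icc 0 L) := by
    apply ContinuousOn.div
    · exact ((Real.continuous_cos.comp_continuousOn hσ_cont).neg.mul
        (Real.continuous_sqrt.comp_continuousOn
          (continuousOn_const.add (continuousOn_const.mul (hu_cont.pow 2)))))
    · exact continuousOn_const.add (continuousOn_const.mul (hu_cont.pow 2))
    · exact fun s hs => (hden_pos s hs).ne'
  have hFderiv : ∀ s ∈ Set.Ioo 0 L, HasDerivAt F (g s) s := by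
    intro s hs
    have hsI : s ∈ Set.Icc 0 L := Set.Ioo_subset_Icc_self hs
    have hnhds : Set.Icc (0:ℝ) L ∈ nhds s := Icc_mem_nhds hs.1 hs.2
    have hu' : HasDerivAt u (u' s) s := (hu_deriv s hsI).hasDerivAt hnhds
    have hσ' : HasDerivAt σ (σ' s) s := hσ_deriv s hs
    have hAs := hA_pos s
    have hus := hu_pos s hs
    have hBs := hden_pos s hsI
    set A := Real.sqrt (1 + τ ^ 2 * (u s) ^ 2) with hA
    have hApos : 0 < A := Real.sqrt_pos.mpr hAs
    have hA2 : A ^ 2 = 1 + τ ^ 2 * (u s) ^ 2 := Real.sq_sqrt hAs.le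
    have hq : HasDerivAt (fun t => 1 + τ ^ 2 * (u t) ^ 2)
        (τ ^ 2 * (2 * u s * u' s)) s := by
      have := ((hu'.pow 2).const_mul (τ ^ 2)).const_add 1
      refine this.congr_deriv ?_
      ring
    have hsqrt : HasDerivAt (fun t => Real.sqrt (1 + τ ^ 2 * (u t) ^ 2))
        (τ ^ 2 * (2 * u s * u' s) / (2 * A)) s := hq.sqrt hAs.ne'
    have hnum : HasDerivAt (fun t => -Real.cos (σ t) * Real.sqrt (1 + τ ^ 2 * (u t) ^ 2))
        ((σ' s * Real.sin (σ s)) * A + (-Real.cos (σ s)) * (τ ^ 2 * (2 * u s * u' s) / (2 * A))) s := by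
      have hc : HasDerivAt (fun t => -Real.cos (σ t)) (σ' s * Real.sin (σ s)) s := by
        have := (hσ'.cos).neg
        refine this.congr_deriv ?_; ring
      exact hc.mul hsqrt
    have hden : HasDerivAt (fun t => 1 + (k / 4) * (u t) ^ 2) ((k / 4) * (2 * u s * u' s)) s := by
      have := ((hu'.pow 2).const_mul (k / 4)).const_add 1
      refine this.congr_deriv ?_; ring
    have hD := hnum.div hden hBs.ne'
    refine hD.congr_deriv ?_
    symm
    rw [hg]
    have hode' := hode s hsI
    rw [hode', ← hA]
    have hsc := Real.sin_sq_add_cos_sq (σ s)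
    set B := 1 + k / 4 * u s ^ 2 with hB
    exact willmore_aux k τ (u s) (Real.cos (σ s)) (Real.sin (σ s)) (σ' s) A B
      hus.ne' hApos hBs hA2 hB hsc
  have hL' : (0:ℝ) ≤ L := hL.le
  have key : ∫ s in (0:ℝ)..L, g s = F L - F 0 :=
    intervalIntegral.integral_eq_sub_of_hasDerivAt_of_le hL' hFcont hFderiv hint
  have hF0 : F 0 = -1 := by
    simp only [hF]
    rw [hu0, hσ0]
    norm_num
  have hFL : F L = 1 := by
    simp only [hF]
    rw [huL, hσL]
    norm_num
  rw [key, hF0, hFL]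
  ring
end

section
/- Let k, τ, H ∈ ℝ and let I ⊆ ℝ be an open interval. Suppose u, σ : ℝ → ℝ are differentiable on I with u twice differentiable on I, u(s) > 0 and 1 + (k/4)·u(s)² > 0 for all s ∈ I, and for all s ∈ I: u'(s) = (1 + (k/4)·u(s)²)·cos σ(s), σ'(s) = 2H − (1/u(s) − (k/4)·u(s))·sin σ(s), and sin σ(s) = H·u(s). Let w(s) = u(s)·√(1 + τ²·u(s)²)/(1 + (k/4)·u(s)²) and g(s) = u(s)·cos σ(s)·sin σ(s)/((1 + (k/4)·u(s)²)·√(1 + τ²·u(s)²)). Then w is twice differentiable on I, g is differentiable on I, and for every s ∈ I: 2H³ + H·(2·((1 + (k/4)·u(s)²)/(u(s)·√(1 + τ²·u(s)²)))·w''(s) + (1/2)·(k − 4τ²)·cos² σ(s)/(1 + τ²·u(s)²) + k/2) + (1/2)·(k − 4τ²)·((1 + (k/4)·u(s)²)/(u(s)·√(1 + τ²·u(s)²)))·g'(s) = 0. -/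
set_option maxHeartbeats 1000000


/-- On a rotationally invariant CMC sphere profile in `E(k,τ)` (i.e. a solution of
`u' = (1 + (k/4)u²)·cos σ`, `σ' = 2H − (1/u − (k/4)u)·sin σ` with `sin σ = H·u`),
the functions `w = u√(1 + τ²u²)/(1 + (k/4)u²)` and
`g = u·cos σ·sin σ/((1 + (k/4)u²)√(1 + τ²u²))` are respectively twice
differentiable and differentiable on the interval, and the Euler–Lagrange
expression of the Willmore-like functional vanishes:
`2H³ + H(2·((1 + (k/4)u²)/(u√(1 + τ²u²)))·w'' + (1/2)(k − 4τ²)cos²σ/(1 + τ²u²) + k/2)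
 + (1/2)(k − 4τ²)·((1 + (k/4)u²)/(u√(1 + τ²u²)))·g' = 0`. -/
theorem cmc_sphere_satisfies_euler_lagrange
    (k τ H a b : ℝ) (u σ u' σ' u'' : ℝ → ℝ)
    (hu_deriv : ∀ s ∈ Set.Ioo a b, HasDerivAt u (u' s) s)
    (hu_deriv2 : ∀ s ∈ Set.Ioo a b, HasDerivAt u' (u'' s) s)
    (hσ_deriv : ∀ s ∈ Set.Ioo a b, HasDerivAt σ (σ' s) s)
    (hu_pos : ∀ s ∈ Set.Ioo a b, 0 < u s)
    (hden_pos : ∀ s ∈ Set.Ioo a b, 0 < 1 + (k / 4) * (u s) ^ 2)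
    (hode_u : ∀ s ∈ Set.Ioo a b,
      u' s = (1 + (k / 4) * (u s) ^ 2) * Real.cos (σ s))
    (hode_σ : ∀ s ∈ Set.Ioo a b,
      σ' s = 2 * H - (1 / u s - (k / 4) * u s) * Real.sin (σ s))
    (hcmc : ∀ s ∈ Set.Ioo a b, Real.sin (σ s) = H * u s) :
    (∀ s ∈ Set.Ioo a b, DifferentiableAt ℝ
        (fun t => u t * Real.sqrt (1 + τ ^ 2 * (u t) ^ 2) /
          (1 + (k / 4) * (u t) ^ 2)) s) ∧
    (∀ s ∈ Set.Ioo a b, DifferentiableAt ℝ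
        (deriv (fun t => u t * Real.sqrt (1 + τ ^ 2 * (u t) ^ 2) /
          (1 + (k / 4) * (u t) ^ 2))) s) ∧
    (∀ s ∈ Set.Ioo a b, DifferentiableAt ℝ
        (fun t => u t * Real.cos (σ t) * Real.sin (σ t) /
          ((1 + (k / 4) * (u t) ^ 2) * Real.sqrt (1 + τ ^ 2 * (u t) ^ 2))) s) ∧
    (∀ s ∈ Set.Ioo a b,
      2 * H ^ 3 +
        H * (2 * ((1 + (k / 4) * (u s) ^ 2) /
              (u s * Real.sqrt (1 + τ ^ 2 * (u s) ^ 2))) *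
            deriv (deriv (fun t => u t * Real.sqrt (1 + τ ^ 2 * (u t) ^ 2) /
              (1 + (k / 4) * (u t) ^ 2))) s +
          (1 / 2) * (k - 4 * τ ^ 2) * Real.cos (σ s) ^ 2 /
            (1 + τ ^ 2 * (u s) ^ 2) + k / 2) +
        (1 / 2) * (k - 4 * τ ^ 2) *
          ((1 + (k / 4) * (u s) ^ 2) /
            (u s * Real.sqrt (1 + τ ^ 2 * (u s) ^ 2))) *
          deriv (fun t => u t * Real.cos (σ t) * Real.sin (σ t) /
            ((1 + (k / 4) * (u t) ^ 2) * Real.sqrt (1 + τ ^ 2 * (u t) ^ 2))) s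
        = 0) := by
  -- basic positivity facts
  have hQpos : ∀ s ∈ Set.Ioo a b, 0 < 1 + τ ^ 2 * (u s) ^ 2 := fun s hs => by positivity
  have hSpos : ∀ s ∈ Set.Ioo a b, 0 < Real.sqrt (1 + τ ^ 2 * (u s) ^ 2) :=
    fun s hs => Real.sqrt_pos.2 (hQpos s hs)
  have hS2 : ∀ s ∈ Set.Ioo a b,
      (Real.sqrt (1 + τ ^ 2 * (u s) ^ 2)) ^ 2 = 1 + τ ^ 2 * (u s) ^ 2 :=
    fun s hs => Real.sq_sqrt (hQpos s hs).le
  -- derivative of S = sqrt(1+τ²u²)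
  have hSd : ∀ s ∈ Set.Ioo a b, HasDerivAt (fun t => Real.sqrt (1 + τ ^ 2 * (u t) ^ 2))
      (τ ^ 2 * u s * u' s / Real.sqrt (1 + τ ^ 2 * (u s) ^ 2)) s := by
    intro s hs
    have h1 : HasDerivAt (fun t => 1 + τ ^ 2 * (u t) ^ 2) (τ ^ 2 * (2 * u s ^ 1 * u' s)) s :=
      (((hu_deriv s hs).pow 2).const_mul (τ ^ 2)).const_add 1
    have h2 := h1.sqrt (ne_of_gt (hQpos s hs))
    convert h2 using 1
    have hSne := (hSpos s hs).ne'
    field_simp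
  -- derivative of D = 1+(k/4)u²
  have hDd : ∀ s ∈ Set.Ioo a b, HasDerivAt (fun t => 1 + (k / 4) * (u t) ^ 2)
      (k / 4 * (2 * u s ^ 1 * u' s)) s := by
    intro s hs
    exact (((hu_deriv s hs).pow 2).const_mul (k / 4)).const_add 1
  -- first derivative of w
  have hwd : ∀ s ∈ Set.Ioo a b, HasDerivAt
      (fun t => u t * Real.sqrt (1 + τ ^ 2 * (u t) ^ 2) / (1 + (k / 4) * (u t) ^ 2))
      (u' s * (1 + (2 * τ ^ 2 - k / 4) * (u s) ^ 2) /
        (Real.sqrt (1 + τ ^ 2 * (u s) ^ 2) * (1 + (k / 4) * (u s) ^ 2) ^ 2)) s := by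
    intro s hs
    have hN : HasDerivAt (fun t => u t * Real.sqrt (1 + τ ^ 2 * (u t) ^ 2))
        (u' s * Real.sqrt (1 + τ ^ 2 * (u s) ^ 2) +
          u s * (τ ^ 2 * u s * u' s / Real.sqrt (1 + τ ^ 2 * (u s) ^ 2))) s :=
      (hu_deriv s hs).mul (hSd s hs)
    have h := hN.div (hDd s hs) (ne_of_gt (hden_pos s hs))
    refine h.congr_deriv (Eq.symm ?_)
    have h2 := hS2 s hs
    have hSne := (hSpos s hs).ne'
    have hDne := (hden_pos s hs).ne'
    set U := u s
    set U' := u' s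
    set S := Real.sqrt (1 + τ ^ 2 * U ^ 2) with hSdef
    rw [div_eq_div_iff (mul_ne_zero hSne (pow_ne_zero 2 hDne)) (pow_ne_zero 2 hDne)]
    field_simp
    linear_combination (-U' * (64 + 16 * k * U ^ 2 - 4 * k ^ 2 * U ^ 4 - k ^ 3 * U ^ 6)) * h2
  -- second derivative of w
  have hW2d : ∀ s ∈ Set.Ioo a b, HasDerivAt
      (fun t => u' t * (1 + (2 * τ ^ 2 - k / 4) * (u t) ^ 2) /
        (Real.sqrt (1 + τ ^ 2 * (u t) ^ 2) * (1 + (k / 4) * (u t) ^ 2) ^ 2))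
      (((u'' s * (1 + (2 * τ ^ 2 - k / 4) * (u s) ^ 2) +
            u' s * ((2 * τ ^ 2 - k / 4) * (2 * u s ^ 1 * u' s))) *
          (Real.sqrt (1 + τ ^ 2 * (u s) ^ 2) * (1 + (k / 4) * (u s) ^ 2) ^ 2) -
        u' s * (1 + (2 * τ ^ 2 - k / 4) * (u s) ^ 2) *
          (τ ^ 2 * u s * u' s / Real.sqrt (1 + τ ^ 2 * (u s) ^ 2) *
              (1 + (k / 4) * (u s) ^ 2) ^ 2 +
            Real.sqrt (1 + τ ^ 2 * (u s) ^ 2) *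
              (2 * (1 + (k / 4) * (u s) ^ 2) ^ 1 * (k / 4 * (2 * u s ^ 1 * u' s))))) /
        (Real.sqrt (1 + τ ^ 2 * (u s) ^ 2) * (1 + (k / 4) * (u s) ^ 2) ^ 2) ^ 2) s := by
    intro s hs
    have hA : HasDerivAt (fun t => 1 + (2 * τ ^ 2 - k / 4) * (u t) ^ 2)
        ((2 * τ ^ 2 - k / 4) * (2 * u s ^ 1 * u' s)) s :=
      (((hu_deriv s hs).pow 2).const_mul _).const_add 1
    exact ((hu_deriv2 s hs).mul hA).div ((hSd s hs).mul ((hDd s hs).pow 2))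
      (mul_ne_zero (hSpos s hs).ne' (pow_ne_zero 2 (hden_pos s hs).ne'))
  -- derivative of g
  have hgd : ∀ s ∈ Set.Ioo a b, HasDerivAt
      (fun t => u t * Real.cos (σ t) * Real.sin (σ t) /
        ((1 + (k / 4) * (u t) ^ 2) * Real.sqrt (1 + τ ^ 2 * (u t) ^ 2)))
      ((((u' s * Real.cos (σ s) + u s * (-Real.sin (σ s) * σ' s)) * Real.sin (σ s) +
          u s * Real.cos (σ s) * (Real.cos (σ s) * σ' s)) *
         ((1 + (k / 4) * (u s) ^ 2) * Real.sqrt (1 + τ ^ 2 * (u s) ^ 2)) -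
        u s * Real.cos (σ s) * Real.sin (σ s) *
          (k / 4 * (2 * u s ^ 1 * u' s) * Real.sqrt (1 + τ ^ 2 * (u s) ^ 2) +
           (1 + (k / 4) * (u s) ^ 2) *
             (τ ^ 2 * u s * u' s / Real.sqrt (1 + τ ^ 2 * (u s) ^ 2)))) /
        ((1 + (k / 4) * (u s) ^ 2) * Real.sqrt (1 + τ ^ 2 * (u s) ^ 2)) ^ 2) s := by
    intro s hs
    exact (((hu_deriv s hs).mul (hσ_deriv s hs).cos).mul (hσ_deriv s hs).sin).div
      ((hDd s hs).mul (hSd s hs))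
      (mul_ne_zero (hden_pos s hs).ne' (hSpos s hs).ne')
  -- the second-order ODE for u
  have hupp : ∀ s ∈ Set.Ioo a b, u'' s =
      k / 4 * (2 * u s ^ 1 * u' s) * Real.cos (σ s) +
        (1 + (k / 4) * (u s) ^ 2) * (-Real.sin (σ s) * σ' s) := by
    intro s hs
    have h1 := (hDd s hs).mul (hσ_deriv s hs).cos
    have heq : u' =ᶠ[nhds s]
        (fun t => (1 + (k / 4) * (u t) ^ 2) * Real.cos (σ t)) :=
      Filter.eventuallyEq_of_mem (isOpen_Ioo.mem_nhds hs) (fun t ht => hode_u t ht)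
    exact (hu_deriv2 s hs).unique (h1.congr_of_eventuallyEq heq)
  -- deriv w is W' on the interval, so it has derivative W''
  have hdwH : ∀ s ∈ Set.Ioo a b, HasDerivAt
      (deriv (fun t => u t * Real.sqrt (1 + τ ^ 2 * (u t) ^ 2) /
        (1 + (k / 4) * (u t) ^ 2)))
      (((u'' s * (1 + (2 * τ ^ 2 - k / 4) * (u s) ^ 2) +
            u' s * ((2 * τ ^ 2 - k / 4) * (2 * u s ^ 1 * u' s))) *
          (Real.sqrt (1 + τ ^ 2 * (u s) ^ 2) * (1 + (k / 4) * (u s) ^ 2) ^ 2) -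
        u' s * (1 + (2 * τ ^ 2 - k / 4) * (u s) ^ 2) *
          (τ ^ 2 * u s * u' s / Real.sqrt (1 + τ ^ 2 * (u s) ^ 2) *
              (1 + (k / 4) * (u s) ^ 2) ^ 2 +
            Real.sqrt (1 + τ ^ 2 * (u s) ^ 2) *
              (2 * (1 + (k / 4) * (u s) ^ 2) ^ 1 * (k / 4 * (2 * u s ^ 1 * u' s))))) /
        (Real.sqrt (1 + τ ^ 2 * (u s) ^ 2) * (1 + (k / 4) * (u s) ^ 2) ^ 2) ^ 2) s := by
    intro s hs
    refine (hW2d s hs).congr_of_eventuallyEq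
      (Filter.eventuallyEq_of_mem (isOpen_Ioo.mem_nhds hs) (fun t ht => ?_))
    exact (hwd t ht).deriv
  refine ⟨fun s hs => (hwd s hs).differentiableAt,
    fun s hs => (hdwH s hs).differentiableAt,
    fun s hs => (hgd s hs).differentiableAt, ?_⟩
  intro s hs
  rw [(hdwH s hs).deriv, (hgd s hs).deriv, hupp s hs, hode_u s hs, hode_σ s hs,
    hcmc s hs]
  have hc2 : Real.cos (σ s) ^ 2 = 1 - (H * u s) ^ 2 := by
    have h := Real.sin_sq_add_cos_sq (σ s)
    rw [hcmc s hs] at h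
    linarith
  have h2 := hS2 s hs
  have hSne := (hSpos s hs).ne'
  have hDne := (hden_pos s hs).ne'
  have hUne := (hu_pos s hs).ne'
  set U := u s
  set C := Real.cos (σ s) with hC
  set S := Real.sqrt (1 + τ ^ 2 * U ^ 2) with hSdef
  rw [← h2]
  set D := 1 + k / 4 * U ^ 2 with hDdef
  field_simp
  linear_combination ((64) * H ^ 3 * S ^ 2 + (-16) * H ^ 3 * U ^ 4 * k * τ ^ 2 + (64) * H * C ^ 2 * τ ^ 2 + (16) * H * S ^ 2 * k + (-16) * H ^ 3 * U ^ 2 * k + (-16) * H * C ^ 2 * k + (16) * H * U ^ 2 * k * τ ^ 2 + (16) * H * k) * h2 + ((-16) * H * U ^ 4 * k * τ ^ 4 + (-32) * H * U ^ 2 * k * τ ^ 2 + (-16) * H * k) * hc2 + ((192) * H * S ^ 2 * C ^ 2 * τ ^ 2 + (-16) * H * S ^ 2 * C ^ 2 * k + (-64) * H * C ^ 2 * U ^ 2 * τ ^ 4 + (-64) * H * C ^ 2 * τ ^ 2) * hDdef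
end

section
/- Let k, τ, H ∈ ℝ and L > 0. Suppose u, σ : [0, L] → ℝ are continuous on [0, L] and differentiable on (0, L), with u continuously differentiable on [0, L], u(0) = u(L) = 0, u(s) > 0 for s ∈ (0, L), 1 + (k/4)·u(s)² > 0 for all s ∈ [0, L], cos σ(0) = 1, cos σ(L) = −1, and for all s ∈ (0, L): u'(s) = (1 + (k/4)·u(s)²)·cos σ(s) and σ'(s) = 2H − (1/u(s) − (k/4)·u(s))·sin σ(s). Define the integrand G(s) = ((1/4)·(σ'(s) − (1/u(s) + (k/4)·u(s))·sin σ(s))² + σ'(s)·sin σ(s)/u(s) − (k/4)·sin² σ(s) + (k/4 − τ²)·cos² σ(s)/(1 + τ²·u(s)²) + k/4)·(u(s)·√(1 + τ²·u(s)²)/(1 + (k/4)·u(s)²)), and assume G is interval-integrable on [0, L]. Then 2π·∫₀^L G(s) ds ≥ 4π, with equality if and only if sin σ(s) = H·u(s) for all s ∈ (0, L). -/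
open MeasureTheory intervalIntegral
open Topology Filter

set_option maxHeartbeats 4000000 in
/-- For a rotationally invariant sphere profile of constant mean curvature `H` in
`E(k,τ)`, the Willmore-like energy `2π∫₀^L G` is at least `4π`, with equality if
and only if `sin σ = H·u` on `(0, L)` (i.e. exactly at the CMC spheres). -/
theorem willmore_like_energy_ge_four_pi
    (k τ H L : ℝ) (hL : 0 < L) (u σ u' σ' : ℝ → ℝ)
    (hu_cont : ContinuousOn u (Set.Icc 0 L))
    (hσ_cont : ContinuousOn σ (Set.Icc 0 L))
    (hu_deriv : ∀ s ∈ Set.Icc 0 L, HasDerivWithinAt u (u' s) (Set.Icc 0 L) s)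
    (hu'_cont : ContinuousOn u' (Set.Icc 0 L))
    (hσ_deriv : ∀ s ∈ Set.Ioo 0 L, HasDerivAt σ (σ' s) s)
    (hu0 : u 0 = 0) (huL : u L = 0)
    (hu_pos : ∀ s ∈ Set.Ioo 0 L, 0 < u s)
    (hden_pos : ∀ s ∈ Set.Icc 0 L, 0 < 1 + (k / 4) * (u s) ^ 2)
    (hσ0 : Real.cos (σ 0) = 1) (hσL : Real.cos (σ L) = -1)
    (hode_u : ∀ s ∈ Set.Ioo 0 L,
      u' s = (1 + (k / 4) * (u s) ^ 2) * Real.cos (σ s))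
    (hode_σ : ∀ s ∈ Set.Ioo 0 L,
      σ' s = 2 * H - (1 / u s - (k / 4) * u s) * Real.sin (σ s))
    (hint : IntervalIntegrable
      (fun s => ((1 / 4) * (σ' s - (1 / u s + (k / 4) * u s) *
            Real.sin (σ s)) ^ 2 +
          σ' s * Real.sin (σ s) / u s - (k / 4) * Real.sin (σ s) ^ 2 +
          (k / 4 - τ ^ 2) * Real.cos (σ s) ^ 2 / (1 + τ ^ 2 * (u s) ^ 2) +
          k / 4) *
        (u s * Real.sqrt (1 + τ ^ 2 * (u s) ^ 2) / (1 + (k / 4) * (u s) ^ 2)))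
      volume 0 L) :
    4 * Real.pi ≤ 2 * Real.pi *
      ∫ s in (0 : ℝ)..L,
        ((1 / 4) * (σ' s - (1 / u s + (k / 4) * u s) * Real.sin (σ s)) ^ 2 +
            σ' s * Real.sin (σ s) / u s - (k / 4) * Real.sin (σ s) ^ 2 +
            (k / 4 - τ ^ 2) * Real.cos (σ s) ^ 2 / (1 + τ ^ 2 * (u s) ^ 2) +
            k / 4) *
          (u s * Real.sqrt (1 + τ ^ 2 * (u s) ^ 2) /
            (1 + (k / 4) * (u s) ^ 2)) ∧
    (2 * Real.pi *
      ∫ s in (0 : ℝ)..L,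
        ((1 / 4) * (σ' s - (1 / u s + (k / 4) * u s) * Real.sin (σ s)) ^ 2 +
            σ' s * Real.sin (σ s) / u s - (k / 4) * Real.sin (σ s) ^ 2 +
            (k / 4 - τ ^ 2) * Real.cos (σ s) ^ 2 / (1 + τ ^ 2 * (u s) ^ 2) +
            k / 4) *
          (u s * Real.sqrt (1 + τ ^ 2 * (u s) ^ 2) /
            (1 + (k / 4) * (u s) ^ 2)) = 4 * Real.pi ↔
      ∀ s ∈ Set.Ioo 0 L, Real.sin (σ s) = H * u s) := by
  set Gf : ℝ → ℝ := (fun s => ((1 / 4) * (σ' s - (1 / u s + (k / 4) * u s) *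
            Real.sin (σ s)) ^ 2 +
          σ' s * Real.sin (σ s) / u s - (k / 4) * Real.sin (σ s) ^ 2 +
          (k / 4 - τ ^ 2) * Real.cos (σ s) ^ 2 / (1 + τ ^ 2 * (u s) ^ 2) +
          k / 4) *
        (u s * Real.sqrt (1 + τ ^ 2 * (u s) ^ 2) / (1 + (k / 4) * (u s) ^ 2)))
    with hGf
  set P : ℝ → ℝ := (fun x => -Real.cos (σ x) *
      (Real.sqrt (1 + τ ^ 2 * u x ^ 2) / (1 + k / 4 * u x ^ 2))) with hP
  set Qf : ℝ → ℝ := (fun x => Real.sqrt (1 + τ ^ 2 * u x ^ 2) /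
      (u x * (1 + k / 4 * u x ^ 2)) * (H * u x - Real.sin (σ x)) ^ 2) with hQ
  have hP0 : P 0 = -1 := by
    simp only [hP, hu0, hσ0]
    norm_num
  have hPL : P L = 1 := by
    simp only [hP, huL, hσL]
    norm_num
  have hone : ∀ x : ℝ, (0:ℝ) < 1 + τ ^ 2 * u x ^ 2 := by intro x; positivity
  have hPcont : ContinuousOn P (Set.Icc 0 L) := by
    apply ((Real.continuous_cos.comp_continuousOn hσ_cont).neg).mul
    apply ContinuousOn.div
    · exact Real.continuous_sqrt.comp_continuousOn
        (continuousOn_const.add (continuousOn_const.mul (hu_cont.pow 2)))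
    · exact continuousOn_const.add (continuousOn_const.mul (hu_cont.pow 2))
    · exact fun x hx => (hden_pos x hx).ne'
  have hQcontIoo : ContinuousOn Qf (Set.Ioo 0 L) := by
    have hu_c : ContinuousOn u (Set.Ioo 0 L) := hu_cont.mono Set.Ioo_subset_Icc_self
    have hσ_c : ContinuousOn σ (Set.Ioo 0 L) := hσ_cont.mono Set.Ioo_subset_Icc_self
    apply ContinuousOn.mul
    · apply ContinuousOn.div
      · exact Real.continuous_sqrt.comp_continuousOn
          (continuousOn_const.add (continuousOn_const.mul (hu_c.pow 2)))
      · exact hu_c.mul (continuousOn_const.add (continuousOn_const.mul (hu_c.pow 2)))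
      · intro x hx
        exact (mul_pos (hu_pos x hx) (hden_pos x (Set.Ioo_subset_Icc_self hx))).ne'
    · exact (((continuousOn_const.mul hu_c).sub
        (Real.continuous_sin.comp_continuousOn hσ_c)).pow 2)
  -- the key pointwise derivative identity
  have hderiv : ∀ s ∈ Set.Ioo 0 L, HasDerivAt P (Gf s - Qf s) s := by
    intro s hs
    have hsIcc : s ∈ Set.Icc 0 L := Set.Ioo_subset_Icc_self hs
    have hu' : HasDerivAt u (u' s) s :=
      (hu_deriv s hsIcc).hasDerivAt (Icc_mem_nhds hs.1 hs.2)
    have hσd := hσ_deriv s hs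
    have hUpos : 0 < u s := hu_pos s hs
    have hDpos : 0 < 1 + k / 4 * u s ^ 2 := hden_pos s hsIcc
    have h1 : 0 < 1 + τ ^ 2 * u s ^ 2 := hone s
    have hrpos : 0 < Real.sqrt (1 + τ ^ 2 * u s ^ 2) := Real.sqrt_pos.mpr h1
    have hinner : HasDerivAt (fun x => 1 + τ ^ 2 * u x ^ 2)
        (τ ^ 2 * (2 * u s * u' s)) s := by
      have := ((hu'.pow 2).const_mul (τ ^ 2)).const_add 1
      simpa [mul_comm, mul_assoc, mul_left_comm] using this
    have hsqrt : HasDerivAt (fun x => Real.sqrt (1 + τ ^ 2 * u x ^ 2))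
        (τ ^ 2 * (2 * u s * u' s) / (2 * Real.sqrt (1 + τ ^ 2 * u s ^ 2))) s :=
      hinner.sqrt h1.ne'
    have hDen : HasDerivAt (fun x => 1 + k / 4 * u x ^ 2)
        (k / 4 * (2 * u s * u' s)) s := by
      have := ((hu'.pow 2).const_mul (k / 4)).const_add 1
      simpa [mul_comm, mul_assoc, mul_left_comm] using this
    have hcos : HasDerivAt (fun x => -Real.cos (σ x)) (Real.sin (σ s) * σ' s) s := by
      simpa [Pi.neg_def] using (hσd.cos).neg
    have hq : HasDerivAt (fun x => Real.sqrt (1 + τ ^ 2 * u x ^ 2) / (1 + k / 4 * u x ^ 2))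
        ((τ ^ 2 * (2 * u s * u' s) / (2 * Real.sqrt (1 + τ ^ 2 * u s ^ 2)) *
            (1 + k / 4 * u s ^ 2) -
          Real.sqrt (1 + τ ^ 2 * u s ^ 2) * (k / 4 * (2 * u s * u' s))) /
          (1 + k / 4 * u s ^ 2) ^ 2) s :=
      hsqrt.div hDen hDpos.ne'
    have hPd := hcos.mul hq
    have hval : Real.sin (σ s) * σ' s *
          (Real.sqrt (1 + τ ^ 2 * u s ^ 2) / (1 + k / 4 * u s ^ 2)) +
        (-Real.cos (σ s)) *
          ((τ ^ 2 * (2 * u s * u' s) / (2 * Real.sqrt (1 + τ ^ 2 * u s ^ 2)) *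
              (1 + k / 4 * u s ^ 2) -
            Real.sqrt (1 + τ ^ 2 * u s ^ 2) * (k / 4 * (2 * u s * u' s))) /
            (1 + k / 4 * u s ^ 2) ^ 2) = Gf s - Qf s := by
      simp only [hGf, hQ]
      rw [hode_u s hs, hode_σ s hs]
      set U := u s with hUdef
      set S := Real.sin (σ s) with hSdef
      set C := Real.cos (σ s) with hCdef
      set r := Real.sqrt (1 + τ ^ 2 * U ^ 2) with hrdef
      set d := 1 + k / 4 * U ^ 2 with hddef
      set b := 1 + τ ^ 2 * U ^ 2 with hbdef
      have hUne : U ≠ 0 := hUpos.ne'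
      have hdne : d ≠ 0 := hDpos.ne'
      have hbne : b ≠ 0 := h1.ne'
      have hrne : r ≠ 0 := hrpos.ne'
      have hr2 : r ^ 2 = b := Real.sq_sqrt h1.le
      have hC2 : C ^ 2 = 1 - S ^ 2 := by
        have := Real.sin_sq_add_cos_sq (σ s); linarith
      have hk : k = 4 * (d - 1) / U ^ 2 := by
        rw [hddef]; field_simp; ring
      have ht : τ ^ 2 = (b - 1) / U ^ 2 := by
        rw [hbdef]; field_simp; ring
      rw [hk, ht]
      have hr3 : r ^ 3 = b * r := by rw [pow_succ, hr2]
      have hr4 : r ^ 4 = b ^ 2 := by rw [show (4:ℕ) = 2*2 from rfl, pow_mul, hr2]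
      have hr5 : r ^ 5 = b ^ 2 * r := by rw [pow_succ, hr4]
      field_simp
      ring_nf
      simp only [hr2, hr3, hr4, hr5, hC2]
      ring
    rw [hP]
    exact hval ▸ hPd
  -- nonnegativity of Q
  have hQnn : ∀ x ∈ Set.Ioo 0 L, 0 ≤ Qf x := by
    intro x hx
    rw [hQ]
    have h1 := hu_pos x hx
    have h2 := hden_pos x (Set.Ioo_subset_Icc_self hx)
    positivity
  -- interval integrability of Q on compact subintervals
  have hQint : ∀ a b : ℝ, 0 < a → a ≤ b → b < L → IntervalIntegrable Qf volume a b := by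
    intro a b ha hab hbL
    have hsub : Set.Icc a b ⊆ Set.Ioo 0 L := fun x hx =>
      ⟨lt_of_lt_of_le ha hx.1, lt_of_le_of_lt hx.2 hbL⟩
    apply ContinuousOn.intervalIntegrable
    rw [Set.uIcc_of_le hab]
    exact hQcontIoo.mono hsub
  have hGint : ∀ a b : ℝ, 0 ≤ a → a ≤ b → b ≤ L → IntervalIntegrable Gf volume a b := by
    intro a b ha hab hbL
    apply hint.mono_set
    rw [Set.uIcc_of_le hab, Set.uIcc_of_le hL.le]
    exact Set.Icc_subset_Icc ha hbL
  -- FTC on interior subintervals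
  have hFTC : ∀ a b : ℝ, 0 < a → a ≤ b → b < L →
      (∫ s in a..b, Gf s) = (P b - P a) + ∫ s in a..b, Qf s := by
    intro a b ha hab hbL
    have hGb := hGint a b ha.le hab hbL.le
    have hQb := hQint a b ha hab hbL
    have heq := intervalIntegral.integral_eq_sub_of_hasDerivAt_of_le hab
      (hPcont.mono (Set.Icc_subset_Icc ha.le hbL.le))
      (fun x hx => hderiv x ⟨ha.trans hx.1, hx.2.trans hbL⟩) (hGb.sub hQb)
    rw [intervalIntegral.integral_sub hGb hQb] at heq
    linarith
  have hsub_le : ∀ a b : ℝ, 0 < a → a ≤ b → b < L →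
      P b - P a ≤ ∫ s in a..b, Gf s := by
    intro a b ha hab hbL
    have h := hFTC a b ha hab hbL
    have h2 : 0 ≤ ∫ s in a..b, Qf s :=
      intervalIntegral.integral_nonneg hab (fun x hx =>
        hQnn x ⟨lt_of_lt_of_le ha hx.1, lt_of_le_of_lt hx.2 hbL⟩)
    linarith
  -- limit at the left endpoint
  have key0 : ∀ b ∈ Set.Ioo (0:ℝ) L, P b - P 0 ≤ ∫ s in (0:ℝ)..b, Gf s := by
    intro b hb
    have hIb : IntervalIntegrable Gf volume 0 b := hGint 0 b le_rfl hb.1.le hb.2.le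
    have hprim : ContinuousOn (fun a => ∫ s in a..b, Gf s) (Set.Icc 0 b) := by
      have h2 := intervalIntegral.continuousOn_primitive_interval_left (f := Gf)
        (μ := volume) (a := 0) (b := b)
        (by rw [Set.uIcc_of_le hb.1.le]
            exact (integrableOn_Icc_iff_integrableOn_Ioc).mpr hIb.1)
      rwa [Set.uIcc_of_le hb.1.le] at h2
    haveI hne : (𝓝[Set.Ioo (0:ℝ) b] 0).NeBot := left_nhdsWithin_Ioo_neBot hb.1
    have ht1 : Filter.Tendsto (fun a => ∫ s in a..b, Gf s)
        (𝓝[Set.Ioo (0:ℝ) b] 0) (𝓝 (∫ s in (0:ℝ)..b, Gf s)) :=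
      (hprim 0 (Set.left_mem_Icc.mpr hb.1.le)).tendsto.mono_left
        (nhdsWithin_mono 0 Set.Ioo_subset_Icc_self)
    have ht2 : Filter.Tendsto (fun a => P b - P a)
        (𝓝[Set.Ioo (0:ℝ) b] 0) (𝓝 (P b - P 0)) := by
      have hc : Filter.Tendsto P (𝓝[Set.Ioo (0:ℝ) b] 0) (𝓝 (P 0)) :=
        (hPcont 0 (Set.left_mem_Icc.mpr hL.le)).tendsto.mono_left
          (nhdsWithin_mono 0 (fun x hx => ⟨hx.1.le, hx.2.le.trans hb.2.le⟩))
      exact tendsto_const_nhds.sub hc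
    refine le_of_tendsto_of_tendsto ht2 ht1 ?_
    filter_upwards [self_mem_nhdsWithin] with a ha
    exact hsub_le a b ha.1 ha.2.le hb.2
  -- limit at the right endpoint
  have keyL : ∀ a ∈ Set.Ioo (0:ℝ) L, P L - P a ≤ ∫ s in a..L, Gf s := by
    intro a ha
    have hIa : IntervalIntegrable Gf volume a L := hGint a L ha.1.le ha.2.le le_rfl
    have hprim : ContinuousOn (fun x => ∫ s in a..x, Gf s) (Set.Icc a L) := by
      have h2 := intervalIntegral.continuousOn_primitive_interval' (f := Gf)
        (μ := volume) (b₁ := a) (b₂ := L) (a := a) hIa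
        (by rw [Set.uIcc_of_le ha.2.le]; exact Set.left_mem_Icc.mpr ha.2.le)
      rwa [Set.uIcc_of_le ha.2.le] at h2
    haveI hne : (𝓝[Set.Ioo a L] L).NeBot := right_nhdsWithin_Ioo_neBot ha.2
    have ht1 : Filter.Tendsto (fun x => ∫ s in a..x, Gf s)
        (𝓝[Set.Ioo a L] L) (𝓝 (∫ s in a..L, Gf s)) :=
      (hprim L (Set.right_mem_Icc.mpr ha.2.le)).tendsto.mono_left
        (nhdsWithin_mono L Set.Ioo_subset_Icc_self)
    have ht2 : Filter.Tendsto (fun x => P x - P a)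
        (𝓝[Set.Ioo a L] L) (𝓝 (P L - P a)) := by
      have hc : Filter.Tendsto P (𝓝[Set.Ioo a L] L) (𝓝 (P L)) :=
        (hPcont L (Set.right_mem_Icc.mpr hL.le)).tendsto.mono_left
          (nhdsWithin_mono L (fun x hx => ⟨ha.1.le.trans hx.1.le, hx.2.le⟩))
      exact hc.sub tendsto_const_nhds
    refine le_of_tendsto_of_tendsto ht2 ht1 ?_
    filter_upwards [self_mem_nhdsWithin] with x hx
    exact hsub_le a x ha.1 hx.1.le hx.2
  -- main inequality
  have hmain : (2:ℝ) ≤ ∫ s in (0:ℝ)..L, Gf s := by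
    have h05 : L / 2 ∈ Set.Ioo (0:ℝ) L := ⟨by linarith, by linarith⟩
    have h1 := key0 (L/2) h05
    have h2 := keyL (L/2) h05
    have hadd := intervalIntegral.integral_add_adjacent_intervals
      (hGint 0 (L/2) le_rfl h05.1.le h05.2.le) (hGint (L/2) L h05.1.le h05.2.le le_rfl)
    rw [hP0] at h1
    rw [hPL] at h2
    linarith
  have hπ := Real.pi_pos
  constructor
  · nlinarith
  constructor
  · -- equality implies CMC
    intro heq s hs
    have hI2 : (∫ s in (0:ℝ)..L, Gf s) = 2 := by
      have h2 : 2 * Real.pi * (∫ s in (0:ℝ)..L, Gf s) = 2 * Real.pi * 2 := by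
        rw [heq]; ring
      exact mul_left_cancel₀ (by positivity) h2
    set a := s / 2 with hadef
    set b := (s + L) / 2 with hbdef
    have ha : 0 < a := by rw [hadef]; linarith [hs.1]
    have haS : a < s := by rw [hadef]; linarith [hs.1]
    have hsb : s < b := by rw [hbdef]; linarith [hs.2]
    have hbL : b < L := by rw [hbdef]; linarith [hs.2]
    have hab : a ≤ b := (haS.trans hsb).le
    have hQab0 : (∫ t in a..b, Qf t) = 0 := by
      have h1 := key0 a ⟨ha, haS.trans hs.2⟩
      have h2 := keyL b ⟨ha.trans_le (hab.trans le_rfl), hbL⟩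
      have h3 := hFTC a b ha hab hbL
      have hadd1 := intervalIntegral.integral_add_adjacent_intervals
        (hGint 0 a le_rfl ha.le (haS.le.trans hs.2.le))
        (hGint a b ha.le hab hbL.le)
      have hadd2 := intervalIntegral.integral_add_adjacent_intervals
        ((hGint 0 a le_rfl ha.le (haS.le.trans hs.2.le)).trans
          (hGint a b ha.le hab hbL.le))
        (hGint b L (ha.trans_le hab).le hbL.le le_rfl)
      have hQnn2 : 0 ≤ ∫ t in a..b, Qf t :=
        intervalIntegral.integral_nonneg hab (fun x hx =>
          hQnn x ⟨lt_of_lt_of_le ha hx.1, lt_of_le_of_lt hx.2 hbL⟩)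
      rw [hP0] at h1
      rw [hPL] at h2
      linarith
    have hxmem : ∀ x ∈ Set.Icc a b, (∫ t in a..x, Qf t) = 0 := by
      intro x hx
      have hax := hQint a x ha hx.1 (lt_of_le_of_lt hx.2 hbL)
      have hxb := hQint x b (lt_of_lt_of_le ha hx.1) hx.2 hbL
      have hadd := intervalIntegral.integral_add_adjacent_intervals hax hxb
      have h1 : 0 ≤ ∫ t in a..x, Qf t :=
        intervalIntegral.integral_nonneg hx.1 (fun y hy =>
          hQnn y ⟨lt_of_lt_of_le ha hy.1, lt_of_le_of_lt (hy.2.trans hx.2) hbL⟩)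
      have h2 : 0 ≤ ∫ t in x..b, Qf t :=
        intervalIntegral.integral_nonneg hx.2 (fun y hy =>
          hQnn y ⟨lt_of_lt_of_le (lt_of_lt_of_le ha hx.1) hy.1, lt_of_le_of_lt hy.2 hbL⟩)
      linarith
    have hEv : (fun x => ∫ t in a..x, Qf t) =ᶠ[nhds s] (fun _ => (0:ℝ)) := by
      filter_upwards [isOpen_Ioo.mem_nhds (⟨haS, hsb⟩ : s ∈ Set.Ioo a b)] with x hx
      exact hxmem x (Set.Ioo_subset_Icc_self hx)
    have hQs : HasDerivAt (fun x => ∫ t in a..x, Qf t) (Qf s) s :=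
      intervalIntegral.integral_hasDerivAt_right (hQint a s ha haS.le hs.2)
        (hQcontIoo.stronglyMeasurableAtFilter isOpen_Ioo s hs)
        (hQcontIoo.continuousAt (isOpen_Ioo.mem_nhds hs))
    have h0 : HasDerivAt (fun x => ∫ t in a..x, Qf t) 0 s :=
      (hasDerivAt_const s (0:ℝ)).congr_of_eventuallyEq hEv
    have hQ0 : Qf s = 0 := hQs.unique h0
    rw [hQ] at hQ0
    have hw : 0 < Real.sqrt (1 + τ ^ 2 * u s ^ 2) / (u s * (1 + k / 4 * u s ^ 2)) := by
      have h1 := hu_pos s hs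
      have h2 := hden_pos s (Set.Ioo_subset_Icc_self hs)
      have h3 := Real.sqrt_pos.mpr (hone s)
      positivity
    have hsq : (H * u s - Real.sin (σ s)) ^ 2 = 0 := by
      rcases mul_eq_zero.mp hQ0 with h | h
      · exact absurd h hw.ne'
      · exact h
    have := pow_eq_zero_iff (n := 2) (by norm_num) |>.mp hsq
    linarith [this]
  · -- CMC implies equality
    intro hcmc
    have hd2 : ∀ x ∈ Set.Ioo 0 L, HasDerivAt P (Gf x) x := by
      intro x hx
      have h := hderiv x hx
      have hQ0 : Qf x = 0 := by
        rw [hQ]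
        simp only [hcmc x hx]
        ring
      rwa [hQ0, sub_zero] at h
    have hI := intervalIntegral.integral_eq_sub_of_hasDerivAt_of_le hL.le hPcont hd2 hint
    rw [hI, hPL, hP0]
    ring
end

section
/- Let k ∈ ℝ and H > 0 with 4H² + k > 0. Then there exist a real number L > 0 and continuously differentiable functions u, σ : [0, L] → ℝ such that: u(0) = u(L) = 0; u(s) > 0 for all s ∈ (0, L); 1 + (k/4)·u(s)² > 0 for all s ∈ [0, L]; σ(0) = 0 and σ(L) = π; sin σ(s) = H·u(s) for all s ∈ [0, L]; and for all s ∈ (0, L): u'(s) = (1 + (k/4)·u(s)²)·cos σ(s) and σ'(s) = 2H − (1/u(s) − (k/4)·u(s))·sin σ(s). -/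
open Filter intervalIntegral

/-- Existence of rotationally invariant CMC spheres in `E(k,τ)`: for `H > 0` with
`4H² + k > 0` there is a profile curve, i.e. `L > 0` and continuously
differentiable `u, σ : [0, L] → ℝ` with `u(0) = u(L) = 0`, `u > 0` on `(0, L)`,
`1 + (k/4)u² > 0` on `[0, L]`, `σ(0) = 0`, `σ(L) = π`, `sin σ = H·u` on `[0, L]`,
solving `u' = (1 + (k/4)u²)·cos σ`, `σ' = 2H − (1/u − (k/4)u)·sin σ` on `(0, L)`. -/
theorem exists_cmc_sphere_profile
    (k H : ℝ) (hH : 0 < H) (hHk : 0 < 4 * H ^ 2 + k) :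
    ∃ (L : ℝ) (u σ : ℝ → ℝ), 0 < L ∧
      ContDiffOn ℝ 1 u (Set.Icc 0 L) ∧
      ContDiffOn ℝ 1 σ (Set.Icc 0 L) ∧
      u 0 = 0 ∧ u L = 0 ∧
      (∀ s ∈ Set.Ioo 0 L, 0 < u s) ∧
      (∀ s ∈ Set.Icc 0 L, 0 < 1 + (k / 4) * (u s) ^ 2) ∧
      σ 0 = 0 ∧ σ L = Real.pi ∧
      (∀ s ∈ Set.Icc 0 L, Real.sin (σ s) = H * u s) ∧
      (∀ s ∈ Set.Ioo 0 L,
        HasDerivAt u ((1 + (k / 4) * (u s) ^ 2) * Real.cos (σ s)) s ∧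
        HasDerivAt σ (2 * H - (1 / u s - (k / 4) * u s) * Real.sin (σ s)) s) := by
  have hH4 : (0:ℝ) < 4 * H := by linarith
  have hHne : H ≠ 0 := ne_of_gt hH
  -- the "angular speed" function
  set f : ℝ → ℝ := fun θ => H + k / (4 * H) * Real.sin θ ^ 2 with hf_def
  have hkey : ∀ θ : ℝ, 0 < 4 * H ^ 2 + k * Real.sin θ ^ 2 := by
    intro θ
    rcases le_or_gt 0 k with hk | hk
    · nlinarith [sq_nonneg (Real.sin θ), sq_nonneg H]
    · nlinarith [Real.sin_sq_le_one θ, sq_nonneg H]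
  have hfeq : ∀ θ, f θ = (4 * H ^ 2 + k * Real.sin θ ^ 2) / (4 * H) := by
    intro θ; simp only [hf_def]; field_simp
  have hfpos : ∀ θ, 0 < f θ := fun θ => by
    rw [hfeq]; exact div_pos (hkey θ) hH4
  have hfc : Continuous f := by
    simp only [hf_def]; fun_prop
  have hic : Continuous fun θ => (f θ)⁻¹ := hfc.inv₀ fun θ => ne_of_gt (hfpos θ)
  set g : ℝ → ℝ := fun θ => ∫ t in (0:ℝ)..θ, (f t)⁻¹ with hg_def
  have hg0 : g 0 = 0 := intervalIntegral.integral_same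
  have hg' : ∀ θ, HasDerivAt g (f θ)⁻¹ θ := by
    intro θ
    exact (intervalIntegral.integral_hasStrictDerivAt_right
      (hic.intervalIntegrable _ _) (hic.stronglyMeasurableAtFilter _ _)
      hic.continuousAt).hasDerivAt
  have hgdiff : Differentiable ℝ g := fun θ => (hg' θ).differentiableAt
  have hmono : StrictMono g := by
    apply strictMono_of_deriv_pos
    intro θ; rw [(hg' θ).deriv]; exact inv_pos.mpr (hfpos θ)
  -- growth bounds to get surjectivity
  set M : ℝ := H + |k| / (4 * H) with hM_def
  have hMpos : 0 < M := by
    have h0 : 0 ≤ |k| / (4 * H) := div_nonneg (abs_nonneg k) (le_of_lt hH4)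
    rw [hM_def]; linarith
  have hfM : ∀ θ, f θ ≤ M := by
    intro θ
    have h1 : k * Real.sin θ ^ 2 ≤ |k| := by
      calc k * Real.sin θ ^ 2 ≤ |k| * Real.sin θ ^ 2 :=
            mul_le_mul_of_nonneg_right (le_abs_self k) (sq_nonneg _)
        _ ≤ |k| * 1 := mul_le_mul_of_nonneg_left (Real.sin_sq_le_one θ) (abs_nonneg k)
        _ = |k| := mul_one _
    have : k / (4 * H) * Real.sin θ ^ 2 ≤ |k| / (4 * H) := by
      rw [div_mul_eq_mul_div]
      exact div_le_div_of_nonneg_right h1 hH4.le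
    simp only [hf_def, hM_def]; linarith
  have hiM : ∀ θ, M⁻¹ ≤ (f θ)⁻¹ := fun θ =>
    inv_anti₀ (hfpos θ) (hfM θ)
  have hφmono : Monotone fun θ => g θ - θ * M⁻¹ := by
    apply monotone_of_deriv_nonneg
    · exact hgdiff.sub ((differentiable_id).mul_const _)
    · intro θ
      have hd : HasDerivAt (fun θ => g θ - θ * M⁻¹) ((f θ)⁻¹ - M⁻¹) θ :=
        (hg' θ).sub (hasDerivAt_mul_const _)
      rw [hd.deriv]
      linarith [hiM θ]
  have hlow : ∀ θ : ℝ, 0 ≤ θ → θ * M⁻¹ ≤ g θ := by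
    intro θ hθ
    have := hφmono hθ
    simp only [hg0, zero_mul, sub_zero] at this
    linarith [this]
  have hhigh : ∀ θ : ℝ, θ ≤ 0 → g θ ≤ θ * M⁻¹ := by
    intro θ hθ
    have := hφmono hθ
    simp only [hg0, zero_mul, sub_zero] at this
    linarith [this]
  have htop : Tendsto g atTop atTop := by
    apply tendsto_atTop_mono' atTop
      (Filter.eventually_atTop.2 ⟨0, fun θ hθ => hlow θ hθ⟩)
    exact Tendsto.atTop_mul_const (inv_pos.mpr hMpos) tendsto_id
  have hbot : Tendsto g atBot atBot := by
    apply tendsto_atBot_mono' atBot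
      (Filter.eventually_atBot.2 ⟨0, fun θ hθ => hhigh θ hθ⟩)
    exact Tendsto.atBot_mul_const (inv_pos.mpr hMpos) tendsto_id
  have hsurj : Function.Surjective g := hgdiff.continuous.surjective htop hbot
  set e : ℝ ≃o ℝ := StrictMono.orderIsoOfSurjective g hmono hsurj with he_def
  set sg : ℝ → ℝ := fun s => e.symm s with hsg_def
  have hgsg : ∀ s, g (sg s) = s := fun s => e.apply_symm_apply s
  have hsgg : ∀ θ, sg (g θ) = θ := fun θ => e.symm_apply_apply θ
  have hecoe : ∀ θ, e θ = g θ := fun θ => rfl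
  have hsgcont : Continuous sg := (e.symm).continuous
  have hsg' : ∀ s, HasDerivAt sg (f (sg s)) s := by
    intro s
    have h := HasDerivAt.of_local_left_inverse (hsgcont.continuousAt)
      (hg' (sg s)) (ne_of_gt (inv_pos.mpr (hfpos (sg s))))
      (Filter.Eventually.of_forall hgsg)
    rwa [inv_inv] at h
  have hsg0 : sg 0 = 0 := by have h := hsgg 0; rwa [hg0] at h
  set L : ℝ := g Real.pi with hL_def
  have hLpos : 0 < L := by
    have h := hmono Real.pi_pos
    rw [hg0] at h; exact h
  have hsgL : sg L = Real.pi := hsgg Real.pi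
  have hsgmono : StrictMono sg := (e.symm).strictMono
  have hrange : ∀ s ∈ Set.Icc 0 L, sg s ∈ Set.Icc 0 Real.pi := by
    intro s hs
    constructor
    · rw [← hsg0]; exact hsgmono.monotone hs.1
    · rw [← hsgL]; exact hsgmono.monotone hs.2
  have hrangeo : ∀ s ∈ Set.Ioo 0 L, sg s ∈ Set.Ioo 0 Real.pi := by
    intro s hs
    constructor
    · rw [← hsg0]; exact hsgmono hs.1
    · rw [← hsgL]; exact hsgmono hs.2
  set u : ℝ → ℝ := fun s => Real.sin (sg s) / H with hu_def
  have hsgC1 : ContDiff ℝ 1 sg := by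
    rw [contDiff_one_iff_deriv]
    refine ⟨fun s => (hsg' s).differentiableAt, ?_⟩
    have : deriv sg = fun s => f (sg s) := funext fun s => (hsg' s).deriv
    rw [this]
    exact hfc.comp hsgcont
  have huC1 : ContDiff ℝ 1 u := (Real.contDiff_sin.comp hsgC1).div_const H
  refine ⟨L, u, sg, hLpos, huC1.contDiffOn, hsgC1.contDiffOn, ?_, ?_, ?_, ?_, hsg0, hsgL, ?_, ?_⟩
  · simp [hu_def, hsg0]
  · simp [hu_def, hsgL]
  · intro s hs
    have := hrangeo s hs
    exact div_pos (Real.sin_pos_of_pos_of_lt_pi this.1 this.2) hH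
  · intro s hs
    have h1 : 1 + k / 4 * (u s) ^ 2 =
        (4 * H ^ 2 + k * Real.sin (sg s) ^ 2) / (4 * H ^ 2) := by
      simp only [hu_def]; field_simp
    rw [h1]
    exact div_pos (hkey _) (by positivity)
  · intro s _
    simp only [hu_def]
    field_simp
  · intro s hs
    have hθ := hrangeo s hs
    have hsin : 0 < Real.sin (sg s) := Real.sin_pos_of_pos_of_lt_pi hθ.1 hθ.2
    have hsne : Real.sin (sg s) ≠ 0 := ne_of_gt hsin
    constructor
    · have hd : HasDerivAt u (Real.cos (sg s) * f (sg s) / H) s :=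
        ((Real.hasDerivAt_sin (sg s)).comp s (hsg' s)).div_const H
      convert hd using 1
      simp only [hu_def, hf_def]
      field_simp
    · convert hsg' s using 1
      simp only [hu_def, hf_def]
      field_simp
      ring
end

section
/- Let k ≤ 0 and H ∈ ℝ with 4H² + k ≤ 0. Then there exist no real number L > 0 and functions u, σ : [0, L] → ℝ, continuous on [0, L] and differentiable on (0, L), such that: u(0) = u(L) = 0; u(s) > 0 for all s ∈ (0, L); 1 + (k/4)·u(s)² > 0 for all s ∈ [0, L]; cos σ(0) = 1 and cos σ(L) = −1; and for all s ∈ (0, L): u'(s) = (1 + (k/4)·u(s)²)·cos σ(s) and σ'(s) = 2H − (1/u(s) − (k/4)·u(s))·sin σ(s). -/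
open Set Filter Topology

/-- Barrier lemma: if `f 0 < b`, `f L ≠ b`, and at every interior point where
`f = b` the derivative exists and is negative, then `f < b` on `[0, L]`. -/
lemma cmc_barrier_lemma {L b : ℝ} {f : ℝ → ℝ} (hL : 0 < L)
    (hf : ContinuousOn f (Set.Icc 0 L)) (h0 : f 0 < b) (hLb : f L ≠ b)
    (hd : ∀ t ∈ Set.Ioo 0 L, f t = b → ∃ d, HasDerivAt f d t ∧ d < 0) :
    ∀ s ∈ Set.Icc 0 L, f s < b := by
  by_contra hcon
  push_neg at hcon
  obtain ⟨s1, hs1, hfs1⟩ := hcon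
  have hSne : ∃ t ∈ Set.Icc 0 L, f t = b := by
    rcases eq_or_lt_of_le hfs1 with h | h
    · exact ⟨s1, hs1, h.symm⟩
    · have hsub : Set.Icc (0:ℝ) s1 ⊆ Set.Icc 0 L := Set.Icc_subset_Icc le_rfl hs1.2
      obtain ⟨t, ht, hft⟩ := intermediate_value_Icc hs1.1 (hf.mono hsub) ⟨h0.le, h.le⟩
      exact ⟨t, hsub ht, hft⟩
  set S : Set ℝ := Set.Icc 0 L ∩ f ⁻¹' {b} with hSdef
  have hSne' : S.Nonempty := by
    obtain ⟨t, ht, hft⟩ := hSne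
    exact ⟨t, ht, hft⟩
  have hScl : IsClosed S := hf.preimage_isClosed_of_isClosed isClosed_Icc isClosed_singleton
  have hSbdd : BddBelow S := ⟨0, fun t ht => ht.1.1⟩
  have ht0S : sInf S ∈ S := hScl.csInf_mem hSne' hSbdd
  set t0 := sInf S with ht0def
  have hft0 : f t0 = b := ht0S.2
  have ht0pos : 0 < t0 := by
    rcases lt_or_eq_of_le ht0S.1.1 with h | h
    · exact h
    · exact absurd hft0 (by rw [← h]; exact ne_of_lt h0)
  have ht0L : t0 < L := by
    rcases lt_or_eq_of_le ht0S.1.2 with h | h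
    · exact h
    · exact absurd hft0 (by rw [h]; exact hLb)
  obtain ⟨d, hder, hdneg⟩ := hd t0 ⟨ht0pos, ht0L⟩ hft0
  have hslope := hasDerivAt_iff_tendsto_slope.mp hder
  have h1 : ∀ᶠ t in 𝓝[<] t0, slope f t0 t < 0 :=
    Filter.Eventually.filter_mono
      (nhdsWithin_mono t0 (fun x hx => ne_of_lt hx))
      (hslope.eventually_lt_const hdneg)
  have h2 : ∀ᶠ t in 𝓝[<] t0, t ∈ Set.Ioo 0 t0 :=
    Filter.eventually_of_mem (Ioo_mem_nhdsLT_of_mem ⟨ht0pos, le_rfl⟩) (fun x hx => hx)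
  obtain ⟨t, hts, htI⟩ := (h1.and h2).exists
  rw [slope_def_field] at hts
  have hftb : b < f t := by
    rcases div_neg_iff.mp hts with ⟨hnum, hden⟩ | ⟨hnum, hden⟩
    · linarith [htI.2]
    · linarith [htI.2]
  obtain ⟨t', ht', hft'⟩ :=
    intermediate_value_Icc htI.1.le
      (hf.mono (Set.Icc_subset_Icc le_rfl (by linarith [htI.2]))) ⟨h0.le, hftb.le⟩
  have ht'S : t' ∈ S := ⟨⟨ht'.1, by linarith [ht'.2, htI.2]⟩, hft'⟩
  have := csInf_le hSbdd ht'S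
  linarith [ht'.2, htI.2]

/-- Nonexistence of rotationally invariant CMC spheres in `E(k,τ)` for `k ≤ 0`
and `4H² + k ≤ 0`: there is no `L > 0` and profile functions `u, σ : [0, L] → ℝ`,
continuous on `[0, L]` and differentiable on `(0, L)`, with `u(0) = u(L) = 0`,
`u > 0` on `(0, L)`, `1 + (k/4)u² > 0` on `[0, L]`, `cos σ(0) = 1`,
`cos σ(L) = −1`, solving `u' = (1 + (k/4)u²)·cos σ`,
`σ' = 2H − (1/u − (k/4)u)·sin σ` on `(0, L)`. -/
theorem no_cmc_sphere_profile_of_small_H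
    (k H : ℝ) (hk : k ≤ 0) (hHk : 4 * H ^ 2 + k ≤ 0) :
    ¬ ∃ (L : ℝ) (u σ : ℝ → ℝ), 0 < L ∧
      ContinuousOn u (Set.Icc 0 L) ∧
      ContinuousOn σ (Set.Icc 0 L) ∧
      u 0 = 0 ∧ u L = 0 ∧
      (∀ s ∈ Set.Ioo 0 L, 0 < u s) ∧
      (∀ s ∈ Set.Icc 0 L, 0 < 1 + (k / 4) * (u s) ^ 2) ∧
      Real.cos (σ 0) = 1 ∧ Real.cos (σ L) = -1 ∧
      (∀ s ∈ Set.Ioo 0 L,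
        HasDerivAt u ((1 + (k / 4) * (u s) ^ 2) * Real.cos (σ s)) s ∧
        HasDerivAt σ (2 * H - (1 / u s - (k / 4) * u s) * Real.sin (σ s)) s) := by
  rintro ⟨L, u, σ, hL, hucont, hσcont, hu0, huL, hupos, hconstr, hcos0, hcosL, hode⟩
  have hπ := Real.pi_pos
  set σ0 := σ 0 with hσ0def
  have hsin0 : Real.sin σ0 = 0 := by
    nlinarith [Real.sin_sq_add_cos_sq σ0]
  -- key inequality: 2|H| < 1/u - (k/4)u at interior points
  have key : ∀ s ∈ Set.Ioo 0 L, 2 * |H| < 1 / u s - k / 4 * u s := by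
    intro s hs
    have hus : 0 < u s := hupos s hs
    have hc : 0 < 1 + k / 4 * (u s) ^ 2 := hconstr s ⟨hs.1.le, hs.2.le⟩
    have hxy : (1 / u s) * (k / 4 * u s) = k / 4 := by field_simp
    have hp : 1 / u s + k / 4 * u s ≠ 0 := by
      intro h
      have h1 : k / 4 * u s = -(1 / u s) := by linarith
      have h2 : (k / 4 * u s) * u s = -(1 / u s) * u s := by rw [h1]
      have h3 : (1 / u s) * u s = 1 := by field_simp
      nlinarith
    have hp2 : 0 < (1 / u s + k / 4 * u s) ^ 2 := by positivity
    have hcpos : 0 < 1 / u s - k / 4 * u s := by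
      have h1 : 0 < 1 / u s := by positivity
      nlinarith
    nlinarith [sq_abs H, abs_nonneg H]
  -- upper barrier: σ < σ0 + π/2
  have hup : ∀ s ∈ Set.Icc 0 L, σ s < σ0 + Real.pi / 2 := by
    apply cmc_barrier_lemma hL hσcont (by linarith)
    · intro h
      have hs1 : Real.sin (σ L) = 1 := by
        rw [h, Real.sin_add_pi_div_two, hcos0]
      nlinarith [Real.sin_sq_add_cos_sq (σ L)]
    · intro t ht heq
      obtain ⟨-, hσ'⟩ := hode t ht
      refine ⟨_, hσ', ?_⟩
      have hsin : Real.sin (σ t) = 1 := by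
        rw [heq, Real.sin_add_pi_div_two, hcos0]
      rw [hsin]
      have hkey := key t ht
      have := le_abs_self H
      linarith
  -- lower barrier: σ0 - π/2 < σ
  have hlow : ∀ s ∈ Set.Icc 0 L, -σ s < Real.pi / 2 - σ0 := by
    apply cmc_barrier_lemma hL hσcont.neg (by show -σ 0 < Real.pi / 2 - σ0; linarith)
    · intro h
      have h' : -σ L = Real.pi / 2 - σ0 := h
      have hσL : σ L = σ0 - Real.pi / 2 := by linarith
      have hs1 : Real.sin (σ L) = -1 := by
        rw [hσL, Real.sin_sub_pi_div_two, hcos0]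
      nlinarith [Real.sin_sq_add_cos_sq (σ L)]
    · intro t ht heq
      obtain ⟨-, hσ'⟩ := hode t ht
      refine ⟨_, hσ'.neg, ?_⟩
      have heq' : -σ t = Real.pi / 2 - σ0 := heq
      have hσt : σ t = σ0 - Real.pi / 2 := by linarith
      have hsin : Real.sin (σ t) = -1 := by
        rw [hσt, Real.sin_sub_pi_div_two, hcos0]
      rw [hsin]
      have hkey := key t ht
      have := neg_abs_le H
      linarith
  have h1 : σ L < σ0 + Real.pi / 2 := hup L ⟨hL.le, le_rfl⟩
  have h2 : σ0 - Real.pi / 2 < σ L := by linarith [hlow L ⟨hL.le, le_rfl⟩]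
  have hrw : σ L = σ0 + (σ L - σ0) := by ring
  rw [hrw, Real.cos_add, hcos0, hsin0] at hcosL
  have hpos : 0 < Real.cos (σ L - σ0) :=
    Real.cos_pos_of_mem_Ioo ⟨by linarith, by linarith⟩
  linarith
end
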